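/- For all real z with 0 ≤ z ≤ 1, one has (4z · cot(πz/2)) / (π · √(1 − z²)) ≤ 8/π², i.e. z · cot(πz/2) ≤ (2/π) · √(1 − z²), where at z = 0 and z = 1 the expression is interpreted by its continuous extension. -/

import Mathlib

set_option maxHeartbeats 1000000


open Real

private lemma aux0 {t : ℝ} (h0 : 0 ≤ t) (h1 : t ≤ Real.pi) :
    t * Real.cos t ≤ Real.sin t := by
  have hmono : MonotoneOn (fun t => Real.sin t - t * Real.cos t) (Set.Icc 0 Real.pi) := by
    apply monotoneOn_of_deriv_nonneg (convex_Icc _ _)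
    · fun_prop
    · intro x hx
      have hd : HasDerivAt (fun t => Real.sin t - t * Real.cos t) (x * Real.sin x) x := by
        have h1 := (Real.hasDerivAt_sin x).sub ((hasDerivAt_id x).mul (Real.hasDerivAt_cos x))
        refine h1.congr_deriv ?_
        simp only [id_eq]
        ring
      exact hd.differentiableAt.differentiableWithinAt
    · intro x hx
      rw [interior_Icc] at hx
      have hd : HasDerivAt (fun t => Real.sin t - t * Real.cos t) (x * Real.sin x) x := by
        have h1 := (Real.hasDerivAt_sin x).sub ((hasDerivAt_id x).mul (Real.hasDerivAt_cos x))
        refine h1.congr_deriv ?_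
        simp only [id_eq]
        ring
      rw [hd.deriv]
      exact mul_nonneg hx.1.le (Real.sin_nonneg_of_nonneg_of_le_pi hx.1.le hx.2.le)
  have := hmono (Set.mem_Icc.2 ⟨le_refl 0, Real.pi_nonneg⟩) (Set.mem_Icc.2 ⟨h0, h1⟩) h0
  simpa using this

private lemma auxA {t : ℝ} (h0 : 0 ≤ t) (h1 : t ≤ Real.pi) :
    t * Real.cos t ≤ Real.sin t * (1 - t ^ 2 / 3) := by
  have hmono : MonotoneOn (fun t => Real.sin t * (1 - t ^ 2 / 3) - t * Real.cos t)
      (Set.Icc 0 Real.pi) := by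
    apply monotoneOn_of_deriv_nonneg (convex_Icc _ _)
    · fun_prop
    · intro x hx
      have hd : HasDerivAt (fun t => Real.sin t * (1 - t ^ 2 / 3) - t * Real.cos t)
          (x / 3 * (Real.sin x - x * Real.cos x)) x := by
        have h2 : HasDerivAt (fun t : ℝ => 1 - t ^ 2 / 3) (-(2 * x / 3)) x := by
          have := ((hasDerivAt_pow 2 x).div_const 3).const_sub 1
          refine this.congr_deriv ?_
          ring
        have h1 := ((Real.hasDerivAt_sin x).mul h2).sub
          ((hasDerivAt_id x).mul (Real.hasDerivAt_cos x))
        refine h1.congr_deriv ?_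
        simp only [id_eq]
        ring
      exact hd.differentiableAt.differentiableWithinAt
    · intro x hx
      rw [interior_Icc] at hx
      have hd : HasDerivAt (fun t => Real.sin t * (1 - t ^ 2 / 3) - t * Real.cos t)
          (x / 3 * (Real.sin x - x * Real.cos x)) x := by
        have h2 : HasDerivAt (fun t : ℝ => 1 - t ^ 2 / 3) (-(2 * x / 3)) x := by
          have := ((hasDerivAt_pow 2 x).div_const 3).const_sub 1
          refine this.congr_deriv ?_
          ring
        have h1 := ((Real.hasDerivAt_sin x).mul h2).sub
          ((hasDerivAt_id x).mul (Real.hasDerivAt_cos x))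
        refine h1.congr_deriv ?_
        simp only [id_eq]
        ring
      rw [hd.deriv]
      have := aux0 hx.1.le hx.2.le
      have hx3 : (0:ℝ) ≤ x / 3 := by linarith [hx.1.le]
      nlinarith
  have := hmono (Set.mem_Icc.2 ⟨le_refl 0, Real.pi_nonneg⟩) (Set.mem_Icc.2 ⟨h0, h1⟩) h0
  simpa using this

/-- For `0 ≤ z ≤ 1`, `z * cot (π z / 2) ≤ (2/π) √(1 - z²)`, i.e.
`(4 z cot(π z/2)) / (π √(1-z²)) ≤ 8/π²`. (At the endpoints the expression is
interpreted via the convention that division by `sin 0 = 0` yields `0`.) -/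
theorem cot_estimate (z : ℝ) (hz0 : 0 ≤ z) (hz1 : z ≤ 1) :
    z * (Real.cos (Real.pi * z / 2) / Real.sin (Real.pi * z / 2)) ≤
      (2 / Real.pi) * Real.sqrt (1 - z ^ 2) := by
  have hπ : (3.141592 : ℝ) < Real.pi := Real.pi_gt_d6
  have hπ' : Real.pi < 3.141593 := Real.pi_lt_d6
  have hπ0 : (0:ℝ) < Real.pi := by linarith
  have hz2 : (0:ℝ) ≤ 1 - z ^ 2 := by nlinarith
  have hSnn : (0:ℝ) ≤ Real.sqrt (1 - z ^ 2) := Real.sqrt_nonneg _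
  rcases eq_or_lt_of_le hz0 with h0 | h0
  · rw [← h0]
    simp
    positivity
  rcases le_or_gt z 0.95 with hr | hr
  · -- regime 1
    obtain ⟨t, ht⟩ : ∃ t, t = Real.pi * z / 2 := ⟨_, rfl⟩
    rw [← ht]
    have ht0 : 0 < t := by rw [ht]; positivity
    have htπ : t < Real.pi / 2 := by rw [ht]; nlinarith
    have hsin : 0 < Real.sin t := Real.sin_pos_of_pos_of_lt_pi ht0 (by linarith)
    have hA := auxA ht0.le (by linarith)
    -- cos t / sin t ≤ (1 - t^2/3)/t
    have hdiv : Real.cos t / Real.sin t ≤ (1 - t ^ 2 / 3) / t := by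
      rw [div_le_div_iff₀ hsin ht0]
      nlinarith
    have step1 : z * (Real.cos t / Real.sin t) ≤ 2 / Real.pi - Real.pi * z ^ 2 / 6 := by
      have := mul_le_mul_of_nonneg_left hdiv hz0
      have heq : z * ((1 - t ^ 2 / 3) / t) = 2 / Real.pi - Real.pi * z ^ 2 / 6 := by
        rw [ht]
        field_simp
        ring
      linarith [heq ▸ this]
    have hS : 1 - Real.pi ^ 2 * z ^ 2 / 12 ≤ Real.sqrt (1 - z ^ 2) := by
      rcases le_or_gt (1 - Real.pi ^ 2 * z ^ 2 / 12) 0 with h | h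
      · linarith
      · rw [Real.le_sqrt h.le hz2]
        have hzsq : z ^ 2 ≤ 0.9025 := by nlinarith
        have h2' : (9.8696:ℝ) < Real.pi ^ 2 := by nlinarith
        have h2'' : Real.pi ^ 2 < 9.8696531 := by nlinarith
        have h4 : Real.pi ^ 4 < 97.41 := by nlinarith [h2'', sq_nonneg Real.pi]
        have h5 : Real.pi ^ 4 * z ^ 2 ≤ 97.41 * 0.9025 :=
          mul_le_mul h4.le hzsq (sq_nonneg z) (by norm_num)
        nlinarith [mul_le_mul_of_nonneg_left h5 (sq_nonneg z),
          mul_le_mul_of_nonneg_left h2'.le (sq_nonneg z), sq_nonneg z]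
    calc z * (Real.cos t / Real.sin t) ≤ 2 / Real.pi - Real.pi * z ^ 2 / 6 := step1
      _ = 2 / Real.pi * (1 - Real.pi ^ 2 * z ^ 2 / 12) := by field_simp; ring
      _ ≤ 2 / Real.pi * Real.sqrt (1 - z ^ 2) := by
          apply mul_le_mul_of_nonneg_left hS (by positivity)
  · -- regime 2 : z > 0.95
    obtain ⟨d, hd⟩ : ∃ d, d = Real.pi * (1 - z) / 2 := ⟨_, rfl⟩
    have hd0 : 0 ≤ d := by rw [hd]; nlinarith
    have hd1 : d ≤ 0.0786 := by rw [hd]; nlinarith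
    have hcos_t : Real.cos (Real.pi * z / 2) = Real.sin d := by
      rw [hd, show Real.pi * z / 2 = Real.pi / 2 - Real.pi * (1 - z) / 2 by ring,
        Real.cos_pi_div_two_sub]
    have hsin_t : Real.sin (Real.pi * z / 2) = Real.cos d := by
      rw [hd, show Real.pi * z / 2 = Real.pi / 2 - Real.pi * (1 - z) / 2 by ring,
        Real.sin_pi_div_two_sub]
    rw [hcos_t, hsin_t]
    have hcosd : 1 - d ^ 2 / 2 ≤ Real.cos d := Real.one_sub_sq_div_two_le_cos
    have hc0 : (0:ℝ) < 1 - d ^ 2 / 2 := by nlinarith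
    have hcosd0 : 0 < Real.cos d := lt_of_lt_of_le hc0 hcosd
    have hsind : Real.sin d ≤ d := Real.sin_le hd0
    have hsind0 : 0 ≤ Real.sin d := Real.sin_nonneg_of_nonneg_of_le_pi hd0 (by nlinarith)
    have hratio : Real.sin d / Real.cos d ≤ d / (1 - d ^ 2 / 2) :=
      div_le_div₀ hd0 hsind hc0 hcosd
    have hzr : z * (Real.sin d / Real.cos d) ≤ d / (1 - d ^ 2 / 2) := by
      have h1 : z * (Real.sin d / Real.cos d) ≤ 1 * (Real.sin d / Real.cos d) :=
        mul_le_mul_of_nonneg_right hz1 (by positivity)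
      rw [one_mul] at h1
      linarith
    have hw0 : (0:ℝ) ≤ 1 - z := by linarith
    have hw05 : (1:ℝ) - z ≤ 0.05 := by linarith
    have h2'' : Real.pi ^ 2 < 9.8696531 := by nlinarith
    have h4 : Real.pi ^ 4 < 97.41 := by nlinarith [h2'', sq_nonneg Real.pi]
    have hc : (0.996:ℝ) ≤ 1 - d ^ 2 / 2 := by nlinarith
    have hc2' : (0.992:ℝ) ≤ (1 - d ^ 2 / 2) ^ 2 := by nlinarith
    have hmm : (1.95:ℝ) * 0.992 ≤ (1 + z) * (1 - d ^ 2 / 2) ^ 2 :=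
      mul_le_mul (by linarith) hc2' (by norm_num) (by linarith)
    have hp4w : Real.pi ^ 4 * (1 - z) ≤ 97.41 * 0.05 :=
      mul_le_mul h4.le hw05 hw0 (by norm_num)
    have key2 : Real.pi ^ 4 * (1 - z) ≤ 16 * ((1 + z) * (1 - d ^ 2 / 2) ^ 2) := by
      nlinarith [hp4w, hmm]
    have hLHS : (Real.pi / 2) ^ 2 * d ^ 2 = Real.pi ^ 4 * (1 - z) ^ 2 / 16 := by
      rw [hd]; ring
    have hineq : (Real.pi / 2) ^ 2 * d ^ 2 ≤ (1 - z ^ 2) * (1 - d ^ 2 / 2) ^ 2 := by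
      nlinarith [mul_le_mul_of_nonneg_left key2 hw0, hLHS]
    have hgoal : Real.pi / 2 * (d / (1 - d ^ 2 / 2)) ≤ Real.sqrt (1 - z ^ 2) := by
      apply Real.le_sqrt_of_sq_le
      have hc2 : (0:ℝ) < (1 - d ^ 2 / 2) ^ 2 := by positivity
      rw [mul_pow, div_pow, div_pow, ← mul_div_assoc, div_le_iff₀ hc2]
      linarith [hineq]
    have hkey : d / (1 - d ^ 2 / 2) ≤ 2 / Real.pi * Real.sqrt (1 - z ^ 2) := by
      have hone : 2 / Real.pi * (Real.pi / 2) = 1 := by field_simp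
      calc d / (1 - d ^ 2 / 2) = 2 / Real.pi * (Real.pi / 2 * (d / (1 - d ^ 2 / 2))) := by
            rw [← mul_assoc, hone, one_mul]
        _ ≤ 2 / Real.pi * Real.sqrt (1 - z ^ 2) :=
            mul_le_mul_of_nonneg_left hgoal (by positivity)
    linarith
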